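/- Sampling duality between the Cannings frequency process and the Cannings ancestral selection process: for every g ≥ 0 and k, n ∈ {1,…,N}, if 𝒥_n is a uniformly chosen subset of {1,…,N} of size n, and if, given A_g = a, 𝒜_g is a uniformly chosen subset of {1,…,N} of size a, then P(𝒥_n ⊆ {1,…,K_g} | K_0 = k) = P(𝒜_g ⊆ {1,…,k} | A_0 = n). Equivalently, E[ K_g(K_g−1)⋯(K_g−n+1) / (N(N−1)⋯(N−n+1)) | K_0 = k ] = E[ k(k−1)⋯(k−A_g+1) / (N(N−1)⋯(N−A_g+1)) | A_0 = n ]. -/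

import Mathlib

open MeasureTheory Filter Finset Topology

noncomputable section

/-- The paintbox condition: `μ` is the law of an exchangeable random vector of
probability weights `(W_1, …, W_N)` (indexed by `0, …, N-1`, padded by zeros). -/
def IsWeights (N : ℕ) (μ : Measure (ℕ → ℝ)) : Prop :=
  IsProbabilityMeasure μ ∧
  (∀ᵐ w ∂μ, (∀ i, 0 ≤ w i) ∧ (∀ i, N ≤ i → w i = 0) ∧
    ∑ i ∈ Finset.range N, w i = 1) ∧
  (∀ σ : Equiv.Perm ℕ, (∀ i, N ≤ i → σ i = i) →
    Measure.map (fun w => w ∘ σ) μ = μ)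

/-- The (conditional on the weights) success probability `P(k, 𝒲)` for the mixed
binomial transition of the Cannings frequency process. -/
def selProb (N : ℕ) (s : ℝ) (k : ℕ) (w : ℕ → ℝ) : ℝ :=
  ((1 - s) * ∑ i ∈ Finset.range k, w i) /
    ((1 - s) * ∑ i ∈ Finset.range k, w i + ∑ i ∈ Finset.Ico k N, w i)

/-- One-step transition probability of the Cannings frequency process with selection:
given `K_{g-1} = k`, `K_g` is mixed binomial with parameters `N` and `P(k,𝒲)`. -/
def canningsStep (N : ℕ) (s : ℝ) (μ : Measure (ℕ → ℝ)) (k j : ℕ) : ℝ :=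
  ∫ w, (N.choose j : ℝ) * selProb N s k w ^ j * (1 - selProb N s k w) ^ (N - j) ∂μ

/-- `canningsProb N s μ g k j = P(K_g = j | K_0 = k)`. -/
def canningsProb (N : ℕ) (s : ℝ) (μ : Measure (ℕ → ℝ)) : ℕ → ℕ → ℕ → ℝ
  | 0, k, j => if j = k then 1 else 0
  | g + 1, k, j => ∑ i ∈ Finset.range (N + 1),
      canningsProb N s μ g k i * canningsStep N s μ i j

/-- Law of the sum of `a` independent Geometric(1-s) random variables (trials up to
and including the first success): `negbinom s a h = P(G^{(1)} + ⋯ + G^{(a)} = h)`. -/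
def negbinom (s : ℝ) (a h : ℕ) : ℝ :=
  if a ≤ h then ((h - 1).choose (a - 1) : ℝ) * (1 - s) ^ a * s ^ (h - a) else 0

/-- Probability (given the weights `w`) that exactly `j` boxes are occupied when
`h` balls are placed independently into `N` boxes, ball into box `i` w.p. `w i`
(inclusion–exclusion formula). -/
def occupancy (N : ℕ) (w : ℕ → ℝ) (h j : ℕ) : ℝ :=
  ∑ S ∈ (Finset.range N).powersetCard j, ∑ T ∈ S.powerset,
    (-1 : ℝ) ^ (j - T.card) * (∑ i ∈ T, w i) ^ h

/-- One-step transition probability of the Cannings ancestral selection process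
(CASP): branching (negative binomial) followed by coalescence (balls in boxes). -/
def caspStep (N : ℕ) (s : ℝ) (μ : Measure (ℕ → ℝ)) (a j : ℕ) : ℝ :=
  ∑' h : ℕ, negbinom s a h * ∫ w, occupancy N w h j ∂μ

/-- `caspProb N s μ m a j = P(A_m = j | A_0 = a)`. -/
def caspProb (N : ℕ) (s : ℝ) (μ : Measure (ℕ → ℝ)) : ℕ → ℕ → ℕ → ℝ
  | 0, a, j => if j = a then 1 else 0
  | m + 1, a, j => ∑ i ∈ Finset.range (N + 1),
      caspProb N s μ m a i * caspStep N s μ i j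

/-- The exponent `b_N = - ln s_N / ln N`, so that `s_N = N^{-b_N}`. -/
def bexp (s : ℕ → ℝ) (N : ℕ) : ℝ := - Real.log (s N) / Real.log N

/-- `A` is (a realization on `(Ω, P)` of) the Cannings ancestral selection process
with parameters `N`, `ℒ(𝒲) = μ`, `s`, started at `a0`: its finite-dimensional
distributions are the Markovian ones with one-step transitions `caspStep`. -/
def IsCASPProcess (N : ℕ) (s : ℝ) (μ : Measure (ℕ → ℝ)) {Ω : Type}
    [MeasurableSpace Ω] (P : Measure Ω) (A : ℕ → Ω → ℕ) (a0 : ℕ) : Prop :=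
  IsProbabilityMeasure P ∧
  ∀ (m : ℕ) (a : ℕ → ℕ),
    (P {ω | ∀ i ≤ m, A i ω = a i}).toReal =
      (if a 0 = a0 then 1 else 0) *
        ∏ i ∈ Finset.range m, caspStep N s μ (a i) (a (i + 1))

/-- Upward jump rate of the Moran ancestral selection process. -/
def maspUp (N : ℕ) (s : ℝ) (k : ℕ) : ℝ := k * s * ((N : ℝ) - k) / N

/-- Downward jump rate of the Moran ancestral selection process. -/
def maspDown (N : ℕ) (ρ2 : ℝ) (k : ℕ) : ℝ := ρ2 / N * (k.choose 2 : ℝ)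

/-- Total jump rate of the MASP. -/
def maspRate (N : ℕ) (ρ2 s : ℝ) (k : ℕ) : ℝ := maspUp N s k + maspDown N ρ2 k

/-- Transition matrix of the embedded jump chain of the MASP. -/
def maspJump (N : ℕ) (ρ2 s : ℝ) (k j : ℕ) : ℝ :=
  if j = k + 1 then maspUp N s k / maspRate N ρ2 s k
  else if j + 1 = k then maspDown N ρ2 k / maspRate N ρ2 s k
  else 0

/-- `(J, E)` is the jump-hold description of the Moran ancestral selection process
with parameters `N`, `ρ2`, `s`, started at `n0`: `J` is the embedded jump chain,
and conditionally on it the holding times `E i` are independent exponentials with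
the state-dependent total rates. -/
def IsMASP (N : ℕ) (ρ2 s : ℝ) {Ω : Type} [MeasurableSpace Ω] (P : Measure Ω)
    (J : ℕ → Ω → ℕ) (E : ℕ → Ω → ℝ) (n0 : ℕ) : Prop :=
  IsProbabilityMeasure P ∧
  ∀ (m : ℕ) (a : ℕ → ℕ) (t : ℕ → ℝ), (∀ i, 0 ≤ t i) →
    (P {ω | (∀ i ≤ m, J i ω = a i) ∧ (∀ i ≤ m, t i ≤ E i ω)}).toReal =
      (if a 0 = n0 then 1 else 0)
        * (∏ i ∈ Finset.range m, maspJump N ρ2 s (a i) (a (i + 1)))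
        * ∏ i ∈ Finset.range (m + 1), Real.exp (-(maspRate N ρ2 s (a i)) * t i)

/-- The value `B_r` of the MASP at time `r`, read off from the jump-hold data. -/
def maspVal {Ω : Type} (J : ℕ → Ω → ℕ) (E : ℕ → Ω → ℝ) (r : ℝ) (ω : Ω) : ℕ :=
  J (sSup {i : ℕ | ∑ l ∈ Finset.range i, E l ω ≤ r}) ω


section Aux


variable {N : ℕ} {μ : Measure (ℕ → ℝ)}

lemma meas_sumT (T : Finset ℕ) : Measurable (fun w : ℕ → ℝ => ∑ i ∈ T, w i) :=
  Finset.measurable_sum T fun i _ => measurable_pi_apply i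

lemma ae_sumT_mem (hw : IsWeights N μ) (T : Finset ℕ) (hT : T ⊆ Finset.range N) :
    ∀ᵐ w ∂μ, 0 ≤ ∑ i ∈ T, w i ∧ ∑ i ∈ T, w i ≤ 1 := by
  filter_upwards [hw.2.1] with w ⟨h0, _, h1⟩
  constructor
  · exact Finset.sum_nonneg fun i _ => h0 i
  · rw [← h1]
    exact Finset.sum_le_sum_of_subset_of_nonneg hT fun i _ _ => h0 i

lemma integrable_pow_sumT (hw : IsWeights N μ) (T : Finset ℕ) (hT : T ⊆ Finset.range N) (h : ℕ) :
    Integrable (fun w => (∑ i ∈ T, w i) ^ h) μ := by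
  haveI := hw.1
  refine Integrable.mono' (integrable_const (1 : ℝ)) ((meas_sumT T).pow_const h).aestronglyMeasurable ?_
  filter_upwards [ae_sumT_mem hw T hT] with w ⟨h0, h1⟩
  rw [Real.norm_eq_abs, abs_of_nonneg (pow_nonneg h0 h)]
  exact pow_le_one₀ h0 h1

-- exchangeability: integral of a power of a block sum depends only on the image
lemma integral_pow_image (hw : IsWeights N μ) (σ : Equiv.Perm ℕ) (hσ : ∀ i, N ≤ i → σ i = i)
    (T : Finset ℕ) (h : ℕ) :
    ∫ w, (∑ i ∈ T, w i) ^ h ∂μ = ∫ w, (∑ i ∈ T.image σ, w i) ^ h ∂μ := by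
  have hmap := hw.2.2 σ hσ
  have hmeas : Measurable (fun w : ℕ → ℝ => w ∘ σ) :=
    measurable_pi_lambda _ fun i => measurable_pi_apply (σ i)
  calc ∫ w, (∑ i ∈ T, w i) ^ h ∂μ
      = ∫ w, (∑ i ∈ T, w i) ^ h ∂(Measure.map (fun w => w ∘ σ) μ) := by rw [hmap]
    _ = ∫ w, (∑ i ∈ T, (w ∘ σ) i) ^ h ∂μ := by
        rw [integral_map hmeas.aemeasurable
          (((meas_sumT T).pow_const h).aestronglyMeasurable)]
    _ = ∫ w, (∑ i ∈ T.image σ, w i) ^ h ∂μ := by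
        congr 1; funext w
        rw [Finset.sum_image (fun a _ b _ hab => σ.injective hab)]
        rfl

-- image of a finset under a swap
lemma image_swap_eq (T : Finset ℕ) (a b : ℕ) (ha : a ∈ T) (hb : b ∉ T) :
    T.image (Equiv.swap a b) = insert b (T.erase a) := by
  ext x
  simp only [Finset.mem_image, Finset.mem_insert, Finset.mem_erase]
  constructor
  · rintro ⟨y, hy, rfl⟩
    rcases eq_or_ne y a with rfl | hya
    · left; rw [Equiv.swap_apply_left]
    · rcases eq_or_ne y b with rfl | hyb
      · exact absurd hy hb
      · right; rw [Equiv.swap_apply_of_ne_of_ne hya hyb]; exact ⟨hya, hy⟩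
  · rintro (rfl | ⟨hxa, hx⟩)
    · exact ⟨a, ha, Equiv.swap_apply_left a x⟩
    · refine ⟨x, hx, ?_⟩
      rcases eq_or_ne x b with rfl | hxb
      · exact absurd hx hb
      · exact Equiv.swap_apply_of_ne_of_ne hxa hxb

-- the key exchangeability consequence
lemma integral_pow_sumT_eq (hw : IsWeights N μ) (h : ℕ) :
    ∀ (d : ℕ) (T : Finset ℕ), T ⊆ Finset.range N → (T \ Finset.range T.card).card = d →
    ∫ w, (∑ i ∈ T, w i) ^ h ∂μ = ∫ w, (∑ i ∈ Finset.range T.card, w i) ^ h ∂μ := by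
  intro d
  induction d using Nat.strong_induction_on with
  | _ d ih =>
    intro T hTN hd
    rcases Nat.eq_zero_or_pos d with rfl | hdpos
    · -- T = range T.card
      have hsub : T ⊆ Finset.range T.card := by
        have : T \ Finset.range T.card = ∅ := Finset.card_eq_zero.mp hd
        intro x hx
        by_contra hxr
        have : x ∈ T \ Finset.range T.card := Finset.mem_sdiff.mpr ⟨hx, hxr⟩
        simp [Finset.card_eq_zero.mp hd] at this
      have : T = Finset.range T.card :=
        Finset.eq_of_subset_of_card_le hsub (by simp)
      rw [← this]
    · -- pick a ∈ T \ range t, b ∈ range t \ T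
      set t := T.card with ht
      have hne : (T \ Finset.range t).Nonempty := Finset.card_pos.mp (by omega)
      obtain ⟨a, haa⟩ := hne
      have hne2 : (Finset.range t \ T).Nonempty := by
        rw [← Finset.card_pos, Finset.card_sdiff_comm (by simp [ht])]
        omega
      obtain ⟨b, hbb⟩ := hne2
      rw [Finset.mem_sdiff] at haa hbb
      obtain ⟨haT, har⟩ := haa
      obtain ⟨hbr, hbT⟩ := hbb
      have haN : a < N := Finset.mem_range.mp (hTN haT)
      have hbN : b < N := by
        have h1 : t ≤ N := ht ▸ (Finset.card_le_card hTN).trans (by simp)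
        have h2 := Finset.mem_range.mp hbr; omega
      set T' := insert b (T.erase a) with hT'
      have hswap : T.image (Equiv.swap a b) = T' := image_swap_eq T a b haT hbT
      have htpos : 0 < T.card := Finset.card_pos.mpr ⟨a, haT⟩
      have hcard' : T'.card = t := by
        rw [hT', Finset.card_insert_of_notMem (fun hc => hbT (Finset.mem_of_mem_erase hc)),
          Finset.card_erase_of_mem haT]
        omega
      have hT'N : T' ⊆ Finset.range N := by
        intro x hx
        rw [hT', Finset.mem_insert] at hx
        rcases hx with rfl | hx
        · exact Finset.mem_range.mpr hbN
        · exact hTN (Finset.mem_of_mem_erase hx)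
      have hd' : (T' \ Finset.range t).card = d - 1 := by
        have : T' \ Finset.range t = (T \ Finset.range t).erase a := by
          ext x
          simp only [hT', Finset.mem_sdiff, Finset.mem_insert, Finset.mem_erase,
            Finset.mem_range] at *
          constructor
          · rintro ⟨rfl | ⟨hxa, hxT⟩, hxr⟩
            · omega
            · exact ⟨hxa, hxT, hxr⟩
          · rintro ⟨hxa, hxT, hxr⟩
            exact ⟨Or.inr ⟨hxa, hxT⟩, hxr⟩
        rw [this, Finset.card_erase_of_mem (Finset.mem_sdiff.mpr ⟨haT, har⟩), hd]
      have hstep := integral_pow_image hw (Equiv.swap a b)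
        (fun i hi => Equiv.swap_apply_of_ne_of_ne (by omega) (by omega)) T h
      rw [hswap] at hstep
      rw [hstep]
      have := ih (d - 1) (by omega) T' hT'N (by rw [hcard', hd'])
      rw [hcard'] at this
      rw [this]

lemma choose_mul_choose' (k a t : ℕ) (hta : t ≤ a) :
    k.choose a * a.choose t = k.choose t * (k - t).choose (a - t) := by
  rcases le_or_gt a k with hak | hka
  · exact Nat.choose_mul hta
  · rw [Nat.choose_eq_zero_of_lt hka, Nat.zero_mul]
    rcases le_or_gt t k with htk | hkt
    · rw [Nat.choose_eq_zero_of_lt (show k - t < a - t by omega), Nat.mul_zero]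
    · rw [Nat.choose_eq_zero_of_lt hkt, Nat.zero_mul]

lemma alt_sum_choose (m M : ℕ) (hM : m + 1 ≤ M) :
    ∑ i ∈ Finset.range M, (-1 : ℝ) ^ i * (m.choose i : ℝ) = if m = 0 then 1 else 0 := by
  have h1 : ∑ i ∈ Finset.range M, (-1 : ℝ) ^ i * (m.choose i : ℝ)
      = ∑ i ∈ Finset.range (m + 1), (-1 : ℝ) ^ i * (m.choose i : ℝ) := by
    refine (Finset.sum_subset (by intro i hi; simp at hi ⊢; omega) ?_).symm
    intro i _ hi
    simp only [Finset.mem_range, not_lt] at hi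
    rw [Nat.choose_eq_zero_of_lt (by omega)]
    simp
  rw [h1]
  have h0 := Int.alternating_sum_range_choose (n := m)
  have h2 : ((∑ i ∈ Finset.range (m + 1), (-1 : ℤ) ^ i * (m.choose i : ℤ) : ℤ) : ℝ)
      = ∑ i ∈ Finset.range (m + 1), (-1 : ℝ) ^ i * (m.choose i : ℝ) := by
    push_cast
    exact Finset.sum_congr rfl fun i _ => by ring
  rw [← h2, h0]
  split <;> simp

lemma binom_inversion (f : ℕ → ℝ) (k K : ℕ) (hk : k ≤ K) :
    ∑ a ∈ Finset.range (K + 1), (k.choose a : ℝ) *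
      ∑ t ∈ Finset.range (a + 1), (-1 : ℝ) ^ (a - t) * (a.choose t : ℝ) * f t = f k := by
  have swap : ∑ a ∈ Finset.range (K + 1), ∑ t ∈ Finset.range (a + 1),
        (k.choose a : ℝ) * ((-1 : ℝ) ^ (a - t) * (a.choose t : ℝ) * f t)
      = ∑ t ∈ Finset.range (K + 1), ∑ a ∈ Finset.Ico t (K + 1),
        (k.choose a : ℝ) * ((-1 : ℝ) ^ (a - t) * (a.choose t : ℝ) * f t) := by
    rw [Finset.sum_sigma', Finset.sum_sigma']
    apply Finset.sum_nbij' (fun p => ⟨p.2, p.1⟩) (fun p => ⟨p.2, p.1⟩) <;>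
      simp (config := { contextual := true }) [Finset.mem_sigma, Nat.lt_succ_iff] <;> omega
  calc ∑ a ∈ Finset.range (K + 1), (k.choose a : ℝ) *
        ∑ t ∈ Finset.range (a + 1), (-1 : ℝ) ^ (a - t) * (a.choose t : ℝ) * f t
      = ∑ t ∈ Finset.range (K + 1), ∑ a ∈ Finset.Ico t (K + 1),
        (k.choose a : ℝ) * ((-1 : ℝ) ^ (a - t) * (a.choose t : ℝ) * f t) := by
        rw [← swap]; exact Finset.sum_congr rfl fun a _ => Finset.mul_sum _ _ _
    _ = ∑ t ∈ Finset.range (K + 1), (k.choose t : ℝ) * f t *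
          ∑ i ∈ Finset.range (K + 1 - t), (-1 : ℝ) ^ i * ((k - t).choose i : ℝ) := by
        refine Finset.sum_congr rfl fun t ht => ?_
        rw [Finset.mul_sum, Finset.sum_Ico_eq_sum_range]
        refine Finset.sum_congr rfl fun i _ => ?_
        have hc : (k.choose (t + i) : ℝ) * (((t + i).choose t : ℝ))
            = (k.choose t : ℝ) * ((k - t).choose i : ℝ) := by
          have hcc := choose_mul_choose' k (t + i) t (by omega)
          rw [show t + i - t = i by omega] at hcc
          exact_mod_cast congrArg (Nat.cast : ℕ → ℝ) hcc
        rw [show t + i - t = i by omega]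
        linear_combination ((-1 : ℝ) ^ i * f t) * hc
    _ = f k := by
        rw [Finset.sum_eq_single k]
        · rw [alt_sum_choose (k - k) (K + 1 - k) (by omega)]
          simp
        · intro t ht hne
          simp only [Finset.mem_range, Nat.lt_succ_iff] at ht
          rcases lt_or_gt_of_ne hne with h | h
          · rw [alt_sum_choose (k - t) (K + 1 - t) (by omega), if_neg (by omega), mul_zero]
          · rw [Nat.choose_eq_zero_of_lt h]; simp
        · intro h; exact absurd (by simp [Nat.lt_succ_iff, hk]) h

-- the occupancy integral in closed form
lemma integral_occupancy (hw : IsWeights N μ) (h a : ℕ) (ha : a ≤ N) :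
    ∫ w, occupancy N w h a ∂μ
      = (N.choose a : ℝ) * ∑ t ∈ Finset.range (a + 1),
          (-1 : ℝ) ^ (a - t) * (a.choose t : ℝ) * ∫ w, (∑ i ∈ Finset.range t, w i) ^ h ∂μ := by
  haveI := hw.1
  have hint : ∀ S ∈ (Finset.range N).powersetCard a, ∀ T ∈ S.powerset,
      Integrable (fun w => (-1 : ℝ) ^ (a - T.card) * (∑ i ∈ T, w i) ^ h) μ := by
    intro S hS T hT
    refine (integrable_pow_sumT hw T ?_ h).const_mul _
    exact (Finset.mem_powerset.mp hT).trans (Finset.mem_powersetCard.mp hS).1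
  have step1 : ∫ w, occupancy N w h a ∂μ
      = ∑ S ∈ (Finset.range N).powersetCard a, ∑ T ∈ S.powerset,
          (-1 : ℝ) ^ (a - T.card) * ∫ w, (∑ i ∈ T, w i) ^ h ∂μ := by
    unfold occupancy
    rw [integral_finset_sum _ (fun S hS => integrable_finset_sum _ (hint S hS))]
    refine Finset.sum_congr rfl fun S hS => ?_
    rw [integral_finset_sum _ (hint S hS)]
    exact Finset.sum_congr rfl fun T hT => integral_const_mul _ _
  rw [step1]
  -- replace each inner integral by f (T.card)
  have step2 : ∀ S ∈ (Finset.range N).powersetCard a, ∀ T ∈ S.powerset,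
      ∫ w, (∑ i ∈ T, w i) ^ h ∂μ = ∫ w, (∑ i ∈ Finset.range T.card, w i) ^ h ∂μ := by
    intro S hS T hT
    exact integral_pow_sumT_eq hw h _ T
      ((Finset.mem_powerset.mp hT).trans (Finset.mem_powersetCard.mp hS).1) rfl
  have step3 : ∀ S ∈ (Finset.range N).powersetCard a,
      ∑ T ∈ S.powerset, (-1 : ℝ) ^ (a - T.card) * ∫ w, (∑ i ∈ T, w i) ^ h ∂μ
      = ∑ t ∈ Finset.range (a + 1),
          (-1 : ℝ) ^ (a - t) * (a.choose t : ℝ) * ∫ w, (∑ i ∈ Finset.range t, w i) ^ h ∂μ := by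
    intro S hS
    have hcardS : S.card = a := (Finset.mem_powersetCard.mp hS).2
    calc ∑ T ∈ S.powerset, (-1 : ℝ) ^ (a - T.card) * ∫ w, (∑ i ∈ T, w i) ^ h ∂μ
        = ∑ T ∈ S.powerset, (-1 : ℝ) ^ (a - T.card) * ∫ w, (∑ i ∈ Finset.range T.card, w i) ^ h ∂μ := by
          refine Finset.sum_congr rfl fun T hT => ?_
          rw [step2 S hS T hT]
      _ = ∑ t ∈ Finset.range (S.card + 1), ∑ T ∈ S.powersetCard t,
            (-1 : ℝ) ^ (a - T.card) * ∫ w, (∑ i ∈ Finset.range T.card, w i) ^ h ∂μ := by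
          rw [Finset.sum_powerset]
      _ = ∑ t ∈ Finset.range (a + 1),
            (-1 : ℝ) ^ (a - t) * (a.choose t : ℝ) * ∫ w, (∑ i ∈ Finset.range t, w i) ^ h ∂μ := by
          rw [hcardS]
          refine Finset.sum_congr rfl fun t ht => ?_
          rw [Finset.sum_congr rfl (fun T hT => by
            rw [(Finset.mem_powersetCard.mp hT).2]), Finset.sum_const, Finset.card_powersetCard,
            hcardS, nsmul_eq_mul]
          ring
  rw [Finset.sum_congr rfl step3, Finset.sum_const, Finset.card_powersetCard,
    Finset.card_range, nsmul_eq_mul]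

lemma hasSum_negbinom_mul_pow {s x : ℝ} (hs0 : 0 < s) (hs1 : s < 1)
    (hx0 : 0 ≤ x) (hx1 : x ≤ 1) (n : ℕ) (hn : 1 ≤ n) :
    HasSum (fun h => negbinom s n h * x ^ h) (((1 - s) * x) ^ n / (1 - s * x) ^ n) := by
  have hr : ‖s * x‖ < 1 := by
    rw [Real.norm_eq_abs, abs_of_nonneg (by positivity)]
    nlinarith
  have base := hasSum_choose_mul_geometric_of_norm_lt_one (𝕜 := ℝ) (n - 1) hr
  rw [show n - 1 + 1 = n by omega] at base
  have base2 := base.mul_left (((1 - s) * x) ^ n)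
  rw [mul_one_div] at base2
  have hinj : Function.Injective (fun m : ℕ => m + n) := fun a b hab => by
    simpa using hab
  refine (Function.Injective.hasSum_iff hinj ?_).mp ?_
  · intro h hh
    simp only [Set.mem_range, not_exists] at hh
    have hnh : ¬ n ≤ h := fun hc => hh (h - n) (by omega)
    rw [negbinom, if_neg hnh, zero_mul]
  · have heq : ((fun h => negbinom s n h * x ^ h) ∘ fun m : ℕ => m + n)
        = fun m => ((1 - s) * x) ^ n * (((m + (n - 1)).choose (n - 1) : ℝ) * (s * x) ^ m) := by
      funext m
      simp only [Function.comp_apply, negbinom, if_pos (show n ≤ m + n by omega)]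
      rw [show m + n - 1 = m + (n - 1) by omega, show m + n - n = m by omega, pow_add,
        mul_pow, mul_pow]
      ring
    rw [heq]
    exact base2

lemma hasSum_negbinom {s : ℝ} (hs0 : 0 < s) (hs1 : s < 1) (n : ℕ) (hn : 1 ≤ n) :
    HasSum (negbinom s n) 1 := by
  have h := hasSum_negbinom_mul_pow hs0 hs1 zero_le_one le_rfl n hn
  simp only [one_pow, mul_one] at h
  rwa [div_self (pow_ne_zero _ (by linarith))] at h

lemma negbinom_nonneg {s : ℝ} (hs0 : 0 < s) (hs1 : s < 1) (n h : ℕ) : 0 ≤ negbinom s n h := by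
  unfold negbinom; split
  · have h1 : (0:ℝ) ≤ 1 - s := by linarith
    exact mul_nonneg (mul_nonneg (Nat.cast_nonneg _) (pow_nonneg h1 _)) (pow_nonneg hs0.le _)
  · exact le_refl 0

variable {s : ℝ}

lemma measurable_selProb (k : ℕ) : Measurable (selProb N s k) := by
  unfold selProb
  exact (measurable_const.mul (meas_sumT (Finset.range k))).div
    ((measurable_const.mul (meas_sumT (Finset.range k))).add
      (Finset.measurable_sum _ fun i _ => measurable_pi_apply i))

-- a.e. properties of `selProb`
lemma ae_selProb (hw : IsWeights N μ) (hs0 : 0 < s) (hs1 : s < 1) (k : ℕ) (hkN : k ≤ N) :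
    ∀ᵐ w ∂μ, 0 ≤ ∑ i ∈ Finset.range k, w i ∧ (∑ i ∈ Finset.range k, w i) ≤ 1 ∧
      selProb N s k w = (1 - s) * (∑ i ∈ Finset.range k, w i)
        / (1 - s * ∑ i ∈ Finset.range k, w i) ∧
      0 ≤ selProb N s k w ∧ selProb N s k w ≤ 1 := by
  filter_upwards [hw.2.1] with w hw1
  obtain ⟨h0, _, h1⟩ := hw1
  set W := ∑ i ∈ Finset.range k, w i with hW
  have hW0 : 0 ≤ W := Finset.sum_nonneg fun i _ => h0 i
  have hW1 : W ≤ 1 := by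
    rw [← h1]
    exact Finset.sum_le_sum_of_subset_of_nonneg (Finset.range_subset_range.mpr hkN) fun i _ _ => h0 i
  have hsplit : W + ∑ i ∈ Finset.Ico k N, w i = 1 := by
    rw [hW, Finset.sum_range_add_sum_Ico _ hkN, h1]
  have hden : (1 - s) * W + ∑ i ∈ Finset.Ico k N, w i = 1 - s * W := by
    have : ∑ i ∈ Finset.Ico k N, w i = 1 - W := by linarith
    rw [this]; ring
  have hden_pos : 0 < 1 - s * W := by nlinarith
  have hsel : selProb N s k w = (1 - s) * W / (1 - s * W) := by
    rw [selProb, hden]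
  refine ⟨hW0, hW1, hsel, ?_, ?_⟩
  · rw [hsel]; exact div_nonneg (mul_nonneg (by linarith) hW0) hden_pos.le
  · rw [hsel, div_le_one hden_pos]; nlinarith

lemma integrable_canningsStep_integrand (hw : IsWeights N μ) (hs0 : 0 < s) (hs1 : s < 1)
    (k : ℕ) (hkN : k ≤ N) (j : ℕ) (c : ℝ) :
    Integrable (fun w => (N.choose j : ℝ) * selProb N s k w ^ j
      * (1 - selProb N s k w) ^ (N - j) * c) μ := by
  haveI := hw.1
  refine Integrable.mono' (integrable_const ((N.choose j : ℝ) * |c|)) ?_ ?_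
  · exact ((((measurable_selProb k).pow_const j).const_mul _).mul
      (((measurable_selProb k).const_sub 1).pow_const _)).mul_const c |>.aestronglyMeasurable
  · filter_upwards [ae_selProb hw hs0 hs1 k hkN] with w ⟨_, _, _, hp0, hp1⟩
    rw [Real.norm_eq_abs, abs_mul, abs_mul, abs_mul]
    have h1 : |selProb N s k w ^ j| ≤ 1 := by
      rw [abs_of_nonneg (pow_nonneg hp0 _)]; exact pow_le_one₀ hp0 hp1
    have h2 : |(1 - selProb N s k w) ^ (N - j)| ≤ 1 := by
      rw [abs_of_nonneg (pow_nonneg (by linarith) _)]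
      exact pow_le_one₀ (by linarith) (by linarith)
    have h3 : |(N.choose j : ℝ)| = (N.choose j : ℝ) := abs_of_nonneg (Nat.cast_nonneg _)
    calc |(N.choose j : ℝ)| * |selProb N s k w ^ j| * |(1 - selProb N s k w) ^ (N - j)| * |c|
        ≤ (N.choose j : ℝ) * 1 * 1 * |c| := by
          rw [h3]
          have := Nat.cast_nonneg (α := ℝ) (N.choose j)
          gcongr
      _ = (N.choose j : ℝ) * |c| := by ring

lemma choose_mul_choose'' (k a t : ℕ) (hta : t ≤ a) :
    k.choose a * a.choose t = k.choose t * (k - t).choose (a - t) := choose_mul_choose' k a t hta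

lemma binomial_moment (N n : ℕ) (hn : n ≤ N) (p : ℝ) :
    ∑ j ∈ Finset.range (N + 1),
      (N.choose j : ℝ) * p ^ j * (1 - p) ^ (N - j) * (j.descFactorial n : ℝ)
      = (N.descFactorial n : ℝ) * p ^ n := by
  have h1 : ∑ j ∈ Finset.range (N + 1),
        (N.choose j : ℝ) * p ^ j * (1 - p) ^ (N - j) * (j.descFactorial n : ℝ)
      = ∑ j ∈ Finset.Ico n (N + 1),
        (N.choose j : ℝ) * p ^ j * (1 - p) ^ (N - j) * (j.descFactorial n : ℝ) := by
    refine (Finset.sum_subset (by intro j hj; simp at hj ⊢; omega) ?_).symm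
    intro j hj hj'
    simp only [Finset.mem_range, Finset.mem_Ico, not_and, not_le, Nat.lt_succ_iff] at hj hj'
    rw [Nat.descFactorial_eq_zero_iff_lt.2 (by omega)]
    simp
  rw [h1, Finset.sum_Ico_eq_sum_range]
  have h2 : ∀ i ∈ Finset.range (N + 1 - n),
      (N.choose (n + i) : ℝ) * p ^ (n + i) * (1 - p) ^ (N - (n + i)) * ((n + i).descFactorial n : ℝ)
      = ((N.descFactorial n : ℝ) * p ^ n) * (p ^ i * (1 - p) ^ ((N - n) - i) * ((N - n).choose i : ℝ)) := by
    intro i hi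
    simp only [Finset.mem_range] at hi
    have key : N.choose (n + i) * (n + i).descFactorial n
        = N.descFactorial n * (N - n).choose i := by
      rw [Nat.descFactorial_eq_factorial_mul_choose, Nat.descFactorial_eq_factorial_mul_choose]
      have hc := choose_mul_choose' N (n + i) n (by omega)
      rw [show n + i - n = i by omega] at hc
      calc N.choose (n + i) * (Nat.factorial n * (n + i).choose n)
          = Nat.factorial n * (N.choose (n + i) * (n + i).choose n) := by ring
        _ = Nat.factorial n * (N.choose n * (N - n).choose i) := by rw [hc]
        _ = Nat.factorial n * N.choose n * (N - n).choose i := by ring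
    have hkey : (N.choose (n + i) : ℝ) * ((n + i).descFactorial n : ℝ)
        = (N.descFactorial n : ℝ) * ((N - n).choose i : ℝ) := by
      exact_mod_cast congrArg (Nat.cast : ℕ → ℝ) key
    rw [show N - (n + i) = (N - n) - i by omega, pow_add]
    linear_combination (p ^ n * p ^ i * (1 - p) ^ (N - n - i)) * hkey
  rw [Finset.sum_congr rfl h2, ← Finset.mul_sum]
  have h3 : ∑ i ∈ Finset.range (N + 1 - n),
      p ^ i * (1 - p) ^ ((N - n) - i) * ((N - n).choose i : ℝ) = 1 := by
    have h4 := add_pow p (1 - p) (N - n)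
    rw [show p + (1 - p) = (1 : ℝ) by ring, one_pow] at h4
    rw [show N + 1 - n = (N - n) + 1 by omega, ← h4]
  rw [h3, mul_one]

-- Lemma: the Cannings side in closed form
lemma cannings_side (hw : IsWeights N μ) (hs0 : 0 < s) (hs1 : s < 1)
    (k n : ℕ) (hkN : k ≤ N) (hn1 : 1 ≤ n) (hnN : n ≤ N) :
    ∑ j ∈ Finset.range (N + 1), canningsStep N s μ k j
        * ((j.descFactorial n : ℝ) / (N.descFactorial n : ℝ))
      = ∑' h : ℕ, negbinom s n h * ∫ w, (∑ i ∈ Finset.range k, w i) ^ h ∂μ := by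
  haveI := hw.1
  have hdF : (N.descFactorial n : ℝ) ≠ 0 := by
    rw [Nat.cast_ne_zero]
    intro hc
    exact absurd (Nat.descFactorial_eq_zero_iff_lt.mp hc) (by omega)
  have step1 : ∑ j ∈ Finset.range (N + 1), canningsStep N s μ k j
        * ((j.descFactorial n : ℝ) / (N.descFactorial n : ℝ))
      = ∫ w, ∑ j ∈ Finset.range (N + 1), (N.choose j : ℝ) * selProb N s k w ^ j
          * (1 - selProb N s k w) ^ (N - j)
          * ((j.descFactorial n : ℝ) / (N.descFactorial n : ℝ)) ∂μ := by
    rw [integral_finset_sum _ (fun j _ =>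
      integrable_canningsStep_integrand hw hs0 hs1 k hkN j _)]
    refine Finset.sum_congr rfl fun j _ => ?_
    rw [canningsStep, ← integral_mul_const]
  rw [step1]
  have step2 : ∀ w : ℕ → ℝ, ∑ j ∈ Finset.range (N + 1), (N.choose j : ℝ) * selProb N s k w ^ j
      * (1 - selProb N s k w) ^ (N - j) * ((j.descFactorial n : ℝ) / (N.descFactorial n : ℝ))
      = selProb N s k w ^ n := by
    intro w
    set p := selProb N s k w
    have hbm := binomial_moment N n hnN p
    calc ∑ j ∈ Finset.range (N + 1), (N.choose j : ℝ) * p ^ j * (1 - p) ^ (N - j)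
          * ((j.descFactorial n : ℝ) / (N.descFactorial n : ℝ))
        = (∑ j ∈ Finset.range (N + 1), (N.choose j : ℝ) * p ^ j * (1 - p) ^ (N - j)
          * (j.descFactorial n : ℝ)) / (N.descFactorial n : ℝ) := by
          rw [Finset.sum_div]
          exact Finset.sum_congr rfl fun j _ => by ring
      _ = (N.descFactorial n : ℝ) * p ^ n / (N.descFactorial n : ℝ) := by rw [hbm]
      _ = p ^ n := by field_simp
  simp_rw [step2]
  -- now : ∫ selProb ^ n = ∑' h, negbinom * moment
  have hWsub : Finset.range k ⊆ Finset.range N := Finset.range_subset_range.mpr hkN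
  have hFint : ∀ h : ℕ, Integrable
      (fun w => negbinom s n h * (∑ i ∈ Finset.range k, w i) ^ h) μ :=
    fun h => (integrable_pow_sumT hw _ hWsub h).const_mul _
  have hFnorm : ∀ h : ℕ, ∫ w, ‖negbinom s n h * (∑ i ∈ Finset.range k, w i) ^ h‖ ∂μ
      ≤ negbinom s n h := by
    intro h
    have hb : ∀ᵐ w ∂μ, ‖negbinom s n h * (∑ i ∈ Finset.range k, w i) ^ h‖ ≤ negbinom s n h := by
      filter_upwards [ae_sumT_mem hw _ hWsub] with w ⟨h0, h1⟩
      rw [norm_mul, Real.norm_eq_abs, Real.norm_eq_abs,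
        abs_of_nonneg (negbinom_nonneg hs0 hs1 n h), abs_of_nonneg (pow_nonneg h0 _)]
      nth_rewrite 2 [← mul_one (negbinom s n h)]
      exact mul_le_mul_of_nonneg_left (pow_le_one₀ h0 h1) (negbinom_nonneg hs0 hs1 n h)
    calc ∫ w, ‖negbinom s n h * (∑ i ∈ Finset.range k, w i) ^ h‖ ∂μ
        ≤ ∫ _, negbinom s n h ∂μ := integral_mono_ae (hFint h).norm (integrable_const _) hb
      _ = negbinom s n h := by simp [measure_univ]
  have hFsum : Summable (fun h => ∫ w, ‖negbinom s n h * (∑ i ∈ Finset.range k, w i) ^ h‖ ∂μ) :=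
    Summable.of_nonneg_of_le (fun h => integral_nonneg fun w => norm_nonneg _)
      hFnorm (hasSum_negbinom hs0 hs1 n hn1).summable
  have hswap := integral_tsum_of_summable_integral_norm hFint hFsum
  have hae : ∀ᵐ w ∂μ, selProb N s k w ^ n
      = ∑' h : ℕ, negbinom s n h * (∑ i ∈ Finset.range k, w i) ^ h := by
    filter_upwards [ae_selProb hw hs0 hs1 k hkN] with w ⟨hW0, hW1, hsel, _, _⟩
    have hhs := hasSum_negbinom_mul_pow hs0 hs1 hW0 hW1 n hn1
    rw [hhs.tsum_eq, hsel, div_pow, mul_pow]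
  rw [integral_congr_ae hae, ← hswap]
  exact tsum_congr fun h => integral_const_mul _ _

lemma abs_occupancy_le (hw : IsWeights N μ) (h a : ℕ) :
    ∀ᵐ w ∂μ, |occupancy N w h a| ≤ (N.choose a : ℝ) * 2 ^ a := by
  filter_upwards [hw.2.1] with w hw1
  obtain ⟨h0, _, h1⟩ := hw1
  have hT : ∀ T : Finset ℕ, T ⊆ Finset.range N → |(∑ i ∈ T, w i) ^ h| ≤ 1 := by
    intro T hT
    have hT0 : 0 ≤ ∑ i ∈ T, w i := Finset.sum_nonneg fun i _ => h0 i
    have hT1 : ∑ i ∈ T, w i ≤ 1 := by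
      rw [← h1]; exact Finset.sum_le_sum_of_subset_of_nonneg hT fun i _ _ => h0 i
    rw [abs_of_nonneg (pow_nonneg hT0 _)]
    exact pow_le_one₀ hT0 hT1
  calc |occupancy N w h a|
      ≤ ∑ S ∈ (Finset.range N).powersetCard a, |∑ T ∈ S.powerset,
          (-1 : ℝ) ^ (a - T.card) * (∑ i ∈ T, w i) ^ h| := Finset.abs_sum_le_sum_abs _ _
    _ ≤ ∑ S ∈ (Finset.range N).powersetCard a, (2 : ℝ) ^ a := by
        refine Finset.sum_le_sum fun S hS => ?_
        have hSsub := (Finset.mem_powersetCard.mp hS).1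
        have hScard := (Finset.mem_powersetCard.mp hS).2
        calc |∑ T ∈ S.powerset, (-1 : ℝ) ^ (a - T.card) * (∑ i ∈ T, w i) ^ h|
            ≤ ∑ T ∈ S.powerset, |(-1 : ℝ) ^ (a - T.card) * (∑ i ∈ T, w i) ^ h| :=
              Finset.abs_sum_le_sum_abs _ _
          _ ≤ ∑ T ∈ S.powerset, 1 := by
              refine Finset.sum_le_sum fun T hTm => ?_
              rw [abs_mul, abs_pow, abs_neg, abs_one, one_pow, one_mul]
              exact hT T ((Finset.mem_powerset.mp hTm).trans hSsub)
          _ = (2 : ℝ) ^ a := by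
              rw [Finset.sum_const, Finset.card_powerset, hScard, nsmul_eq_mul, mul_one]
              norm_num
    _ = (N.choose a : ℝ) * 2 ^ a := by
        rw [Finset.sum_const, Finset.card_powersetCard, Finset.card_range, nsmul_eq_mul]

lemma integrable_occupancy (hw : IsWeights N μ) (h a : ℕ) :
    Integrable (fun w => occupancy N w h a) μ := by
  haveI := hw.1
  refine Integrable.mono' (integrable_const ((N.choose a : ℝ) * 2 ^ a)) ?_ ?_
  · refine (Finset.measurable_sum _ fun S _ => Finset.measurable_sum _ fun T _ =>
      ((meas_sumT T).pow_const h).const_mul _).aestronglyMeasurable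
  · filter_upwards [abs_occupancy_le hw h a] with w hb
    rwa [Real.norm_eq_abs]

lemma abs_integral_occupancy_le (hw : IsWeights N μ) (h a : ℕ) :
    |∫ w, occupancy N w h a ∂μ| ≤ (N.choose a : ℝ) * 2 ^ a := by
  haveI := hw.1
  calc |∫ w, occupancy N w h a ∂μ| ≤ ∫ w, |occupancy N w h a| ∂μ := by
        simpa [Real.norm_eq_abs] using
          norm_integral_le_integral_norm (μ := μ) (fun w => occupancy N w h a)
    _ ≤ ∫ _, (N.choose a : ℝ) * 2 ^ a ∂μ :=
        integral_mono_ae (integrable_occupancy hw h a).abs (integrable_const _)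
          (abs_occupancy_le hw h a)
    _ = (N.choose a : ℝ) * 2 ^ a := by simp [measure_univ]

-- Lemma C: the occupancy/sampling identity
lemma occupancy_sampling (hw : IsWeights N μ) (h k : ℕ) (hkN : k ≤ N) :
    ∑ a ∈ Finset.range (N + 1), (∫ w, occupancy N w h a ∂μ)
        * ((k.descFactorial a : ℝ) / (N.descFactorial a : ℝ))
      = ∫ w, (∑ i ∈ Finset.range k, w i) ^ h ∂μ := by
  have step1 : ∀ a ∈ Finset.range (N + 1), (∫ w, occupancy N w h a ∂μ)
        * ((k.descFactorial a : ℝ) / (N.descFactorial a : ℝ))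
      = (k.choose a : ℝ) * ∑ t ∈ Finset.range (a + 1),
          (-1 : ℝ) ^ (a - t) * (a.choose t : ℝ) * ∫ w, (∑ i ∈ Finset.range t, w i) ^ h ∂μ := by
    intro a ha
    simp only [Finset.mem_range, Nat.lt_succ_iff] at ha
    rw [integral_occupancy hw h a ha]
    have hch : (0 : ℝ) < (N.choose a : ℝ) := by
      exact_mod_cast Nat.choose_pos ha
    have hfa : (0 : ℝ) < (Nat.factorial a : ℝ) := by
      exact_mod_cast Nat.factorial_pos a
    have hdf : (k.descFactorial a : ℝ) = (Nat.factorial a : ℝ) * (k.choose a : ℝ) := by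
      exact_mod_cast congrArg (Nat.cast : ℕ → ℝ) (Nat.descFactorial_eq_factorial_mul_choose k a)
    have hdfN : (N.descFactorial a : ℝ) = (Nat.factorial a : ℝ) * (N.choose a : ℝ) := by
      exact_mod_cast congrArg (Nat.cast : ℕ → ℝ) (Nat.descFactorial_eq_factorial_mul_choose N a)
    rw [hdf, hdfN]
    field_simp
  rw [Finset.sum_congr rfl step1,
    binom_inversion (fun t => ∫ w, (∑ i ∈ Finset.range t, w i) ^ h ∂μ) k N hkN]

-- the casp side in closed form
lemma casp_side (hw : IsWeights N μ) (hs0 : 0 < s) (hs1 : s < 1)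
    (k n : ℕ) (hkN : k ≤ N) (hn1 : 1 ≤ n) (hnN : n ≤ N) :
    ∑ a ∈ Finset.range (N + 1), caspStep N s μ n a
        * ((k.descFactorial a : ℝ) / (N.descFactorial a : ℝ))
      = ∑' h : ℕ, negbinom s n h * ∫ w, (∑ i ∈ Finset.range k, w i) ^ h ∂μ := by
  haveI := hw.1
  have hsumm : ∀ a ∈ Finset.range (N + 1), Summable (fun h => negbinom s n h
      * (∫ w, occupancy N w h a ∂μ) * ((k.descFactorial a : ℝ) / (N.descFactorial a : ℝ))) := by
    intro a _
    refine Summable.of_norm_bounded (g := fun h => negbinom s n h * ((N.choose a : ℝ) * 2 ^ a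
        * |(k.descFactorial a : ℝ) / (N.descFactorial a : ℝ)|))
      (((hasSum_negbinom hs0 hs1 n hn1).summable).mul_right _) ?_
    intro h
    rw [Real.norm_eq_abs, abs_mul, abs_mul, abs_of_nonneg (negbinom_nonneg hs0 hs1 n h)]
    calc negbinom s n h * |∫ w, occupancy N w h a ∂μ|
          * |(k.descFactorial a : ℝ) / (N.descFactorial a : ℝ)|
        ≤ negbinom s n h * ((N.choose a : ℝ) * 2 ^ a)
          * |(k.descFactorial a : ℝ) / (N.descFactorial a : ℝ)| := by
          have hnb := negbinom_nonneg hs0 hs1 n h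
          have hb := abs_integral_occupancy_le hw h a
          gcongr
      _ = negbinom s n h * ((N.choose a : ℝ) * 2 ^ a
          * |(k.descFactorial a : ℝ) / (N.descFactorial a : ℝ)|) := by ring
  have step1 : ∑ a ∈ Finset.range (N + 1), caspStep N s μ n a
        * ((k.descFactorial a : ℝ) / (N.descFactorial a : ℝ))
      = ∑ a ∈ Finset.range (N + 1), ∑' h : ℕ, negbinom s n h
          * (∫ w, occupancy N w h a ∂μ) * ((k.descFactorial a : ℝ) / (N.descFactorial a : ℝ)) := by
    refine Finset.sum_congr rfl fun a _ => ?_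
    rw [caspStep, ← tsum_mul_right]
  rw [step1, ← Summable.tsum_finsetSum hsumm]
  refine tsum_congr fun h => ?_
  rw [← occupancy_sampling hw h k hkN, Finset.mul_sum]
  exact Finset.sum_congr rfl fun a _ => by ring

lemma caspStep_zero_right (hw : IsWeights N μ) (hs0 : 0 < s) (hs1 : s < 1)
    (n : ℕ) (hn1 : 1 ≤ n) : caspStep N s μ n 0 = 0 := by
  rw [caspStep]
  convert tsum_zero with h
  rcases Nat.eq_zero_or_pos h with rfl | hh
  · rw [negbinom, if_neg (by omega), zero_mul]
  · have : (fun w => occupancy N w h 0) = fun _ => (0 : ℝ) := by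
      funext w
      rw [occupancy, Finset.powersetCard_zero]
      simp [zero_pow (by omega : h ≠ 0)]
    rw [show (fun w => occupancy N w h 0) = fun _ => (0:ℝ) from this]
    simp

lemma one_step_duality (hw : IsWeights N μ) (hs0 : 0 < s) (hs1 : s < 1)
    (k n : ℕ) (hkN : k ≤ N) (hn1 : 1 ≤ n) (hnN : n ≤ N) :
    ∑ j ∈ Finset.range (N + 1), canningsStep N s μ k j
        * ((j.descFactorial n : ℝ) / (N.descFactorial n : ℝ))
      = ∑ a ∈ Finset.range (N + 1), caspStep N s μ n a
        * ((k.descFactorial a : ℝ) / (N.descFactorial a : ℝ)) := by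
  rw [cannings_side hw hs0 hs1 k n hkN hn1 hnN, casp_side hw hs0 hs1 k n hkN hn1 hnN]

-- Chapman–Kolmogorov commutation for the CASP
lemma casp_CK (g : ℕ) : ∀ n b : ℕ, n ≤ N → b ≤ N →
    ∑ a ∈ Finset.range (N + 1), caspStep N s μ n a * caspProb N s μ g a b
      = caspProb N s μ (g + 1) n b := by
  induction g with
  | zero =>
    intro n b hn hb
    show _ = ∑ i ∈ Finset.range (N + 1), caspProb N s μ 0 n i * caspStep N s μ i b
    have hL : ∑ a ∈ Finset.range (N + 1), caspStep N s μ n a * caspProb N s μ 0 a b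
        = caspStep N s μ n b := by
      rw [Finset.sum_eq_single b]
      · show caspStep N s μ n b * (if b = b then 1 else 0) = _
        simp
      · intro a _ ha
        show caspStep N s μ n a * (if b = a then 1 else 0) = 0
        rw [if_neg (fun hc => ha hc.symm), mul_zero]
      · intro hc
        exact absurd (Finset.mem_range.mpr (by omega)) hc
    have hR : ∑ i ∈ Finset.range (N + 1), caspProb N s μ 0 n i * caspStep N s μ i b
        = caspStep N s μ n b := by
      rw [Finset.sum_eq_single n]
      · show (if n = n then (1:ℝ) else 0) * _ = _
        simp
      · intro i _ hi
        show (if i = n then (1:ℝ) else 0) * caspStep N s μ i b = 0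
        rw [if_neg hi, zero_mul]
      · intro hc
        exact absurd (Finset.mem_range.mpr (by omega)) hc
    rw [hL, hR]
  | succ g ih =>
    intro n b hn hb
    show ∑ a ∈ Finset.range (N + 1), caspStep N s μ n a
        * ∑ i ∈ Finset.range (N + 1), caspProb N s μ g a i * caspStep N s μ i b = _
    have h1 : ∑ a ∈ Finset.range (N + 1), caspStep N s μ n a
        * ∑ i ∈ Finset.range (N + 1), caspProb N s μ g a i * caspStep N s μ i b
        = ∑ i ∈ Finset.range (N + 1), (∑ a ∈ Finset.range (N + 1),
            caspStep N s μ n a * caspProb N s μ g a i) * caspStep N s μ i b := by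
      simp_rw [Finset.mul_sum, Finset.sum_mul]
      rw [Finset.sum_comm]
      exact Finset.sum_congr rfl fun i _ => Finset.sum_congr rfl fun a _ => by ring
    rw [h1]
    have h2 : ∀ i ∈ Finset.range (N + 1), (∑ a ∈ Finset.range (N + 1),
          caspStep N s μ n a * caspProb N s μ g a i) * caspStep N s μ i b
        = caspProb N s μ (g + 1) n i * caspStep N s μ i b := by
      intro i hi
      rw [ih n i hn (by simpa [Nat.lt_succ_iff] using hi)]
    rw [Finset.sum_congr rfl h2]
    rfl

theorem cannings_sampling_duality'
    (hN : 1 ≤ N) (hw : IsWeights N μ) (hs0 : 0 < s) (hs1 : s < 1)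
    (g : ℕ) (k : ℕ) (hkN : k ≤ N) :
    ∀ n, 1 ≤ n → n ≤ N →
    ∑ j ∈ Finset.range (N + 1),
        canningsProb N s μ g k j *
          ((j.descFactorial n : ℝ) / (N.descFactorial n : ℝ)) =
      ∑ a ∈ Finset.range (N + 1),
        caspProb N s μ g n a *
          ((k.descFactorial a : ℝ) / (N.descFactorial a : ℝ)) := by
  induction g with
  | zero =>
    intro n hn1 hnN
    rw [Finset.sum_eq_single k, Finset.sum_eq_single n]
    · show (if k = k then (1:ℝ) else 0) * _ = (if n = n then (1:ℝ) else 0) * _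
      simp
    · intro a _ ha
      show (if a = n then (1:ℝ) else 0) * _ = 0
      rw [if_neg ha, zero_mul]
    · intro hc
      exact absurd (Finset.mem_range.mpr (by omega)) hc
    · intro j _ hj
      show (if j = k then (1:ℝ) else 0) * _ = 0
      rw [if_neg hj, zero_mul]
    · intro hc
      exact absurd (Finset.mem_range.mpr (by omega)) hc
  | succ g ih =>
    intro n hn1 hnN
    have step1 : ∑ j ∈ Finset.range (N + 1), canningsProb N s μ (g + 1) k j
          * ((j.descFactorial n : ℝ) / (N.descFactorial n : ℝ))
        = ∑ i ∈ Finset.range (N + 1), canningsProb N s μ g k i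
            * ∑ j ∈ Finset.range (N + 1), canningsStep N s μ i j
              * ((j.descFactorial n : ℝ) / (N.descFactorial n : ℝ)) := by
      show ∑ j ∈ Finset.range (N + 1), (∑ i ∈ Finset.range (N + 1),
          canningsProb N s μ g k i * canningsStep N s μ i j) * _ = _
      simp_rw [Finset.sum_mul, Finset.mul_sum]
      rw [Finset.sum_comm]
      exact Finset.sum_congr rfl fun i _ => Finset.sum_congr rfl fun j _ => by ring
    rw [step1]
    have step2 : ∀ i ∈ Finset.range (N + 1), canningsProb N s μ g k i
          * ∑ j ∈ Finset.range (N + 1), canningsStep N s μ i j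
            * ((j.descFactorial n : ℝ) / (N.descFactorial n : ℝ))
        = canningsProb N s μ g k i * ∑ a ∈ Finset.range (N + 1), caspStep N s μ n a
            * ((i.descFactorial a : ℝ) / (N.descFactorial a : ℝ)) := by
      intro i hi
      rw [one_step_duality hw hs0 hs1 i n (by simpa [Nat.lt_succ_iff] using hi) hn1 hnN]
    rw [Finset.sum_congr rfl step2]
    have step3 : ∑ i ∈ Finset.range (N + 1), canningsProb N s μ g k i
          * ∑ a ∈ Finset.range (N + 1), caspStep N s μ n a
            * ((i.descFactorial a : ℝ) / (N.descFactorial a : ℝ))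
        = ∑ a ∈ Finset.range (N + 1), caspStep N s μ n a
            * ∑ i ∈ Finset.range (N + 1), canningsProb N s μ g k i
              * ((i.descFactorial a : ℝ) / (N.descFactorial a : ℝ)) := by
      simp_rw [Finset.mul_sum]
      rw [Finset.sum_comm]
      exact Finset.sum_congr rfl fun a _ => Finset.sum_congr rfl fun i _ => by ring
    rw [step3]
    have step4 : ∀ a ∈ Finset.range (N + 1), caspStep N s μ n a
          * ∑ i ∈ Finset.range (N + 1), canningsProb N s μ g k i
            * ((i.descFactorial a : ℝ) / (N.descFactorial a : ℝ))
        = caspStep N s μ n a * ∑ b ∈ Finset.range (N + 1), caspProb N s μ g a b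
            * ((k.descFactorial b : ℝ) / (N.descFactorial b : ℝ)) := by
      intro a ha
      rcases Nat.eq_zero_or_pos a with rfl | ha1
      · rw [caspStep_zero_right hw hs0 hs1 n hn1, zero_mul, zero_mul]
      · rw [ih a ha1 (by simpa [Nat.lt_succ_iff] using ha)]
    rw [Finset.sum_congr rfl step4]
    have step5 : ∑ a ∈ Finset.range (N + 1), caspStep N s μ n a
          * ∑ b ∈ Finset.range (N + 1), caspProb N s μ g a b
            * ((k.descFactorial b : ℝ) / (N.descFactorial b : ℝ))
        = ∑ b ∈ Finset.range (N + 1), (∑ a ∈ Finset.range (N + 1),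
            caspStep N s μ n a * caspProb N s μ g a b)
            * ((k.descFactorial b : ℝ) / (N.descFactorial b : ℝ)) := by
      simp_rw [Finset.mul_sum, Finset.sum_mul]
      rw [Finset.sum_comm]
      exact Finset.sum_congr rfl fun i _ => Finset.sum_congr rfl fun a _ => by ring
    rw [step5]
    refine Finset.sum_congr rfl fun b hb => ?_
    rw [casp_CK g n b hnN (by simpa [Nat.lt_succ_iff] using hb)]

end Aux

/-- **Sampling duality** (Theorem 3.1 / formula (3.2)): for every `g ≥ 0` and
`k, n ∈ {1,…,N}`,
`E[ K_g (K_g−1) ⋯ (K_g−n+1) / (N (N−1) ⋯ (N−n+1)) | K_0 = k ]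
  = E[ k (k−1) ⋯ (k−A_g+1) / (N (N−1) ⋯ (N−A_g+1)) | A_0 = n ]`,
which is the probability that a uniform size-`n` sample lies in `{1,…,K_g}`,
resp. that a uniform set of `A_g` potential ancestors lies in `{1,…,k}`. -/
theorem cannings_sampling_duality
    (N : ℕ) (hN : 1 ≤ N) (μ : Measure (ℕ → ℝ)) (s : ℝ)
    (hw : IsWeights N μ) (hs0 : 0 < s) (hs1 : s < 1)
    (g k n : ℕ) (hk1 : 1 ≤ k) (hkN : k ≤ N) (hn1 : 1 ≤ n) (hnN : n ≤ N) :
    ∑ j ∈ Finset.range (N + 1),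
        canningsProb N s μ g k j *
          ((j.descFactorial n : ℝ) / (N.descFactorial n : ℝ)) =
      ∑ a ∈ Finset.range (N + 1),
        caspProb N s μ g n a *
          ((k.descFactorial a : ℝ) / (N.descFactorial a : ℝ)) := by
  exact cannings_sampling_duality' hN hw hs0 hs1 g k hkN n hn1 hnN

end
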